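/- The weighted Myerson value satisfies Weighted Bargaining Power: for every network g, value function v, positive weight vector w, and all players i,j with ij ∈ g, w_j [Y_i^{w-MV}(g,v) − Y_i^{w-MV}(g−ij,v)] = w_i [Y_j^{w-MV}(g,v) − Y_j^{w-MV}(g−ij,v)]. -/
import Mathlib


open Finset

variable {n : ℕ}

/-- A network on player set `Fin n`: a finite set of (unordered) links. -/
abbrev Network (n : ℕ) := Finset (Sym2 (Fin n))

/-- The set of non-isolated players of a network. -/
def players (g : Network n) : Finset (Fin n) :=
  Finset.univ.filter (fun i => ∃ e ∈ g, i ∈ e)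

/-- Harsanyi dividend of a value function at a network. -/
noncomputable def dividend (v : Network n → ℝ) (g' : Network n) : ℝ :=
  ∑ g'' ∈ g'.powerset, (-1 : ℝ) ^ (g'.card - g''.card) * v g''

/-- The weighted Myerson value. -/
noncomputable def wMV (w : Fin n → ℝ) (v : Network n → ℝ) (g : Network n) (i : Fin n) : ℝ :=
  ∑ g' ∈ g.powerset.filter (fun g' => i ∈ players g'),
    (w i / ∑ j ∈ players g', w j) * dividend v g'

/-- Connectivity of two players through links of `g`. -/
def connectedIn (g : Network n) (i j : Fin n) : Prop :=
  Relation.ReflTransGen (fun a b => s(a, b) ∈ g) i j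

open Classical in
/-- The component of `g` containing the link `e`. -/
noncomputable def component (g : Network n) (e : Sym2 (Fin n)) : Network n :=
  g.filter (fun e' => ∃ i ∈ e, ∃ j ∈ e', connectedIn g i j)

/-- The set of components (maximal connected subnetworks) of `g`. -/
noncomputable def components (g : Network n) : Finset (Network n) :=
  g.image (component g)

/-- Component additive value functions. -/
def componentAdditive (v : Network n → ℝ) : Prop :=
  ∀ g : Network n, v g = ∑ h ∈ components g, v h

open Classical in
/-- The restriction `g|_S` of a network to a coalition `S`. -/
noncomputable def restrict (g : Network n) (S : Finset (Fin n)) : Network n :=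
  g.filter (fun e => ∀ i ∈ e, i ∈ S)

/-- The set `g_i` of links of player `i` in `g`. -/
def glinks (g : Network n) (i : Fin n) : Network n :=
  g.filter (fun e => i ∈ e)


lemma wMV_diff (w : Fin n → ℝ) (v : Network n → ℝ) (g : Network n) (e : Sym2 (Fin n))
    (i : Fin n) (hi : i ∈ e) :
    wMV w v g i - wMV w v (g.erase e) i =
    ∑ g' ∈ g.powerset.filter (fun g' => e ∈ g'),
      (w i / ∑ k ∈ players g', w k) * dividend v g' := by
  classical
  have hpow : (g.erase e).powerset = g.powerset.filter (fun g' => e ∉ g') := by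
    ext s; simp [Finset.subset_erase, and_comm]
  unfold wMV
  rw [hpow, Finset.filter_filter, Finset.sum_filter, Finset.sum_filter, Finset.sum_filter,
    ← Finset.sum_sub_distrib]
  refine Finset.sum_congr rfl fun g' hg' => ?_
  by_cases he : e ∈ g'
  · have hip : i ∈ players g' := by
      simp only [players, Finset.mem_filter, Finset.mem_univ, true_and]
      exact ⟨e, he, hi⟩
    simp [he, hip]
  · simp [he]

/-- The weighted Myerson value satisfies Weighted Bargaining Power. -/
theorem wMV_weightedBargainingPower (w : Fin n → ℝ) (hw : ∀ k, 0 < w k)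
    (v : Network n → ℝ) (hv : v ∅ = 0) (g : Network n) (i j : Fin n)
    (hij : s(i, j) ∈ g) :
    w j * (wMV w v g i - wMV w v (g.erase s(i, j)) i) =
      w i * (wMV w v g j - wMV w v (g.erase s(i, j)) j) := by
  rw [wMV_diff w v g _ i (Sym2.mem_mk_left i j), wMV_diff w v g _ j (Sym2.mem_mk_right i j),
    Finset.mul_sum, Finset.mul_sum]
  exact Finset.sum_congr rfl fun g' _ => by ring
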